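/- Let q ∈ ℕ and d ≥ 1. Let x_1,…,x_n be points of a finite set ν ⊂ ℝ^d with Euclidean diameter diam(ν), and let ω ∈ ℝ^n be such that the signed measure σ = Σ_{i=1}^n ω_i δ_{x_i} has vanishing moments of order q+1. Then for every (q+1)-times continuously differentiable function f : ℝ^d → ℝ all of whose partial derivatives up to order q+1 are bounded, it holds |Σ_{i=1}^n ω_i f(x_i)| ≤ (d/2)^{q+1} · diam(ν)^{q+1} / (q+1)! · ‖f‖_{C^{q+1}} · ‖ω‖_1, where ‖f‖_{C^{q+1}} := max_{|α| ≤ q+1} sup_{x ∈ ℝ^d} |∂^α f(x)| and ‖ω‖_1 = Σ_{i=1}^n |ω_i|. -/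

import Mathlib

open scoped BigOperators


lemma aux_hasFTaylor_comp_const_add {E F : Type*} [NormedAddCommGroup E] [NormedSpace ℝ E]
    [NormedAddCommGroup F] [NormedSpace ℝ F] {N : ℕ∞} {f : E → F}
    {p : E → FormalMultilinearSeries ℝ E F} (hp : HasFTaylorSeriesUpTo N f p) (c : E) :
    HasFTaylorSeriesUpTo N (fun z => f (c + z)) (fun z => p (c + z)) := by
  constructor
  · intro z; exact hp.zero_eq (c + z)
  · intro k hk z
    have h := (hp.fderiv k hk (c + z)).comp z ((hasFDerivAt_id z).const_add c)
    exact h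
  · intro k hk
    exact (hp.cont k hk).comp (continuous_const.add continuous_id)

lemma aux_iteratedFDeriv_const_add {E F : Type*} [NormedAddCommGroup E] [NormedSpace ℝ E]
    [NormedAddCommGroup F] [NormedSpace ℝ F] {N : ℕ} {f : E → F}
    (hf : ContDiff ℝ (N : ℕ) f) (c : E) {m : ℕ} (hm : m ≤ N) (y : E) :
    iteratedFDeriv ℝ m (fun z => f (c + z)) y = iteratedFDeriv ℝ m f (c + y) := by
  have hp : HasFTaylorSeriesUpTo (N : ℕ∞) f (ftaylorSeries ℝ f) :=
    contDiff_iff_ftaylorSeries.mp (by exact_mod_cast hf)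
  exact ((aux_hasFTaylor_comp_const_add hp c).eq_iteratedFDeriv (by exact_mod_cast hm) y).symm



lemma aux_iteratedDeriv_line {E : Type*} [NormedAddCommGroup E] [NormedSpace ℝ E]
    {N : ℕ} {f : E → ℝ} (hf : ContDiff ℝ (N : ℕ) f) (c v : E) {m : ℕ} (hm : m ≤ N) (t : ℝ) :
    iteratedDeriv m (fun s : ℝ => f (c + s • v)) t
      = iteratedFDeriv ℝ m f (c + t • v) (fun _ => v) := by
  set L : ℝ →L[ℝ] E := ContinuousLinearMap.smulRight (ContinuousLinearMap.id ℝ ℝ) v with hL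
  have hLapp : ∀ s : ℝ, L s = s • v := fun s => by simp [hL]
  have hf1 : ContDiff ℝ (N : ℕ) (fun z => f (c + z)) :=
    hf.comp (contDiff_const.add contDiff_id)
  have hfun : (fun s : ℝ => f (c + s • v)) = (fun z => f (c + z)) ∘ L := by
    ext s; simp [hLapp]
  rw [iteratedDeriv_eq_iteratedFDeriv, hfun,
    L.iteratedFDeriv_comp_right hf1 t (by exact_mod_cast hm)]
  simp only [ContinuousMultilinearMap.compContinuousLinearMap_apply]
  rw [aux_iteratedFDeriv_const_add hf c hm (L t)]
  simp [hLapp]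


lemma aux_expand {d m : ℕ}
    (D : ContinuousMultilinearMap ℝ (fun _ : Fin m => EuclideanSpace ℝ (Fin d)) ℝ)
    (w : EuclideanSpace ℝ (Fin d)) :
    D (fun _ => w) = ∑ r : Fin m → Fin d,
      (∏ k, w (r k)) * D (fun k => EuclideanSpace.single (r k) (1 : ℝ)) := by
  have hw : w = ∑ j : Fin d, w j • EuclideanSpace.single j (1 : ℝ) := by
    have h := (EuclideanSpace.basisFun (Fin d) ℝ).sum_repr w
    simp only [EuclideanSpace.basisFun_apply, EuclideanSpace.basisFun_repr] at h
    exact h.symm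
  calc D (fun _ => w) = D (fun _ => ∑ j : Fin d, w j • EuclideanSpace.single j (1 : ℝ)) := by
        rw [← hw]
    _ = ∑ r : Fin m → Fin d, D (fun k => w (r k) • EuclideanSpace.single (r k) (1 : ℝ)) :=
        D.map_sum (fun _ j => w j • EuclideanSpace.single j (1 : ℝ))
    _ = ∑ r : Fin m → Fin d,
          (∏ k, w (r k)) * D (fun k => EuclideanSpace.single (r k) (1 : ℝ)) := by
        refine Finset.sum_congr rfl fun r _ => ?_
        rw [D.map_smul_univ]
        simp

lemma aux_bound {d m : ℕ}
    (D : ContinuousMultilinearMap ℝ (fun _ : Fin m => EuclideanSpace ℝ (Fin d)) ℝ)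
    {C : ℝ} (hC : ∀ r : Fin m → Fin d, |D (fun k => EuclideanSpace.single (r k) (1 : ℝ))| ≤ C)
    (w : EuclideanSpace ℝ (Fin d)) :
    |D (fun _ => w)| ≤ C * (∑ j, |w j|) ^ m := by
  rw [aux_expand]
  calc |∑ r : Fin m → Fin d, (∏ k, w (r k)) * D (fun k => EuclideanSpace.single (r k) (1:ℝ))|
      ≤ ∑ r : Fin m → Fin d, |(∏ k, w (r k)) * D (fun k => EuclideanSpace.single (r k) (1:ℝ))| :=
        Finset.abs_sum_le_sum_abs _ _
    _ ≤ ∑ r : Fin m → Fin d, (∏ k, |w (r k)|) * C := by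
        refine Finset.sum_le_sum fun r _ => ?_
        rw [abs_mul, Finset.abs_prod]
        exact mul_le_mul_of_nonneg_left (hC r) (Finset.prod_nonneg fun _ _ => abs_nonneg _)
    _ = C * (∑ j, |w j|) ^ m := by
        rw [← Finset.sum_mul, mul_comm]
        congr 1
        rw [← Fin.prod_const m (∑ j : Fin d, |w j|), Finset.prod_univ_sum,
          Fintype.piFinset_univ]


lemma aux_coord {d : ℕ} (ν : Finset (EuclideanSpace ℝ (Fin d))) (hν : ν.Nonempty) :
    ∃ c : EuclideanSpace ℝ (Fin d), ∀ y ∈ ν, ∀ j : Fin d,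
      |y j - c j| ≤ Metric.diam (ν : Set (EuclideanSpace ℝ (Fin d))) / 2 := by
  refine ⟨(WithLp.equiv 2 (Fin d → ℝ)).symm
    (fun j => (ν.inf' hν (fun y => y j) + ν.sup' hν (fun y => y j)) / 2), ?_⟩
  intro y hy j
  set lo := ν.inf' hν (fun y => y j) with hlo
  set hi := ν.sup' hν (fun y => y j) with hhi
  have h1 : lo ≤ y j := Finset.inf'_le (fun y : EuclideanSpace ℝ (Fin d) => y j) hy
  have h2 : y j ≤ hi := Finset.le_sup' (fun y : EuclideanSpace ℝ (Fin d) => y j) hy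
  have hdiff : hi - lo ≤ Metric.diam (ν : Set (EuclideanSpace ℝ (Fin d))) := by
    obtain ⟨a, ha, hae⟩ := Finset.exists_mem_eq_sup' hν (fun y => y j)
    obtain ⟨b, hb, hbe⟩ := Finset.exists_mem_eq_inf' hν (fun y => y j)
    have hcoord : dist (a j) (b j) ≤ dist a b := by
      have := Real.sqrt_le_sqrt (Finset.single_le_sum
        (f := fun i => dist (a i) (b i) ^ 2) (fun i _ => sq_nonneg _) (Finset.mem_univ j))
      rw [Real.sqrt_sq dist_nonneg] at this
      rw [EuclideanSpace.dist_eq]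
      exact this
    have hab : dist a b ≤ Metric.diam (ν : Set (EuclideanSpace ℝ (Fin d))) :=
      Metric.dist_le_diam_of_mem (ν.finite_toSet.isBounded) ha hb
    calc hi - lo = a j - b j := by rw [hhi, hlo, hae, hbe]
      _ ≤ |a j - b j| := le_abs_self _
      _ = dist (a j) (b j) := (Real.dist_eq _ _).symm
      _ ≤ _ := hcoord.trans hab
  have hcj : (WithLp.equiv 2 (Fin d → ℝ)).symm
      (fun j => (ν.inf' hν (fun y => y j) + ν.sup' hν (fun y => y j)) / 2) j
      = (lo + hi) / 2 := rfl
  rw [hcj, abs_le]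
  constructor <;> [linarith; linarith]


open scoped BigOperators

theorem stmt_9 {d : ℕ} (hd : 1 ≤ d) (q : ℕ) {n : ℕ}
    (ν : Finset (EuclideanSpace ℝ (Fin d)))
    (x : Fin n → EuclideanSpace ℝ (Fin d)) (hx : ∀ i, x i ∈ ν)
    (ω : Fin n → ℝ)
    (hvan : ∀ p : MvPolynomial (Fin d) ℝ, p.totalDegree ≤ q →
      ∑ i, ω i * MvPolynomial.eval (fun j => x i j) p = 0)
    (f : EuclideanSpace ℝ (Fin d) → ℝ) (hf : ContDiff ℝ (q + 1 : ℕ) f)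
    (Cf : ℝ)
    (hCf : ∀ m : ℕ, m ≤ q + 1 → ∀ (js : Fin m → Fin d) (z : EuclideanSpace ℝ (Fin d)),
      |iteratedFDeriv ℝ m f z (fun k => EuclideanSpace.single (js k) (1 : ℝ))| ≤ Cf) :
    |∑ i, ω i * f (x i)| ≤
      ((d : ℝ) / 2) ^ (q + 1) * Metric.diam (ν : Set (EuclideanSpace ℝ (Fin d))) ^ (q + 1) /
        (Nat.factorial (q + 1) : ℝ) * Cf * ∑ i, |ω i| := by
  classical
  rcases Nat.eq_zero_or_pos n with hn | hn
  · subst hn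
    simp
  set R := Metric.diam (ν : Set (EuclideanSpace ℝ (Fin d))) with hRdef
  have hR0 : 0 ≤ R := Metric.diam_nonneg
  have hCf0 : 0 ≤ Cf :=
    (abs_nonneg _).trans (hCf 0 (Nat.zero_le _) (fun k => k.elim0) 0)
  have hν : ν.Nonempty := ⟨x ⟨0, hn⟩, hx ⟨0, hn⟩⟩
  obtain ⟨c, hc⟩ := aux_coord ν hν
  set K : ℝ := ((d : ℝ) / 2) ^ (q + 1) * R ^ (q + 1) / (Nat.factorial (q + 1) : ℝ) * Cf with hKdef
  -- the Taylor polynomial of f at c, as a multivariate polynomial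
  set P : MvPolynomial (Fin d) ℝ := ∑ m ∈ Finset.range (q + 1), ((m.factorial : ℝ)⁻¹) •
      ∑ r : Fin m → Fin d,
        (iteratedFDeriv ℝ m f c (fun k => EuclideanSpace.single (r k) (1 : ℝ))) •
          ∏ k : Fin m, (MvPolynomial.X (r k) - MvPolynomial.C (c (r k))) with hPdef
  have hdeg : P.totalDegree ≤ q := by
    refine MvPolynomial.totalDegree_finsetSum_le fun m hm => ?_
    refine le_trans (MvPolynomial.totalDegree_smul_le _ _) ?_
    refine MvPolynomial.totalDegree_finsetSum_le fun r _ => ?_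
    refine le_trans (MvPolynomial.totalDegree_smul_le _ _) ?_
    refine le_trans (MvPolynomial.totalDegree_finset_prod _ _) ?_
    have h1 : ∀ k : Fin m,
        (MvPolynomial.X (r k) - MvPolynomial.C (c (r k)) : MvPolynomial (Fin d) ℝ).totalDegree ≤ 1 := by
      intro k
      rw [sub_eq_add_neg, ← MvPolynomial.C_neg]
      refine le_trans (MvPolynomial.totalDegree_add _ _) ?_
      simp [MvPolynomial.totalDegree_X, MvPolynomial.totalDegree_C]
    calc ∑ k : Fin m, (MvPolynomial.X (r k) - MvPolynomial.C (c (r k)) :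
            MvPolynomial (Fin d) ℝ).totalDegree
        ≤ ∑ _k : Fin m, 1 := Finset.sum_le_sum fun k _ => h1 k
      _ = m := by simp
      _ ≤ q := Nat.lt_succ_iff.mp (Finset.mem_range.mp hm)
  have heval : ∀ y : EuclideanSpace ℝ (Fin d), MvPolynomial.eval (fun j => y j) P
      = ∑ m ∈ Finset.range (q + 1),
          ((m.factorial : ℝ)⁻¹) * iteratedFDeriv ℝ m f c (fun _ => y - c) := by
    intro y
    rw [hPdef, map_sum]
    refine Finset.sum_congr rfl fun m _ => ?_
    rw [MvPolynomial.smul_eval]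
    congr 1
    rw [map_sum, aux_expand (iteratedFDeriv ℝ m f c) (y - c)]
    refine Finset.sum_congr rfl fun r _ => ?_
    rw [MvPolynomial.smul_eval, mul_comm]
    congr 1
    rw [map_prod]
    refine Finset.prod_congr rfl fun k _ => ?_
    simp [PiLp.sub_apply]
  -- key pointwise Taylor estimate
  have key : ∀ y ∈ ν, |f y - MvPolynomial.eval (fun j => y j) P| ≤ K := by
    intro y hy
    set v : EuclideanSpace ℝ (Fin d) := y - c with hvdef
    have hS : ∑ j, |v j| ≤ (d : ℝ) * (R / 2) := by
      calc ∑ j, |v j| ≤ ∑ _j : Fin d, (R / 2) := by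
            refine Finset.sum_le_sum fun j _ => ?_
            have := hc y hy j
            simpa [hvdef, PiLp.sub_apply] using this
        _ = (d : ℝ) * (R / 2) := by simp [Finset.sum_const, Finset.card_univ, nsmul_eq_mul]
    have hS0 : 0 ≤ ∑ j, |v j| := Finset.sum_nonneg fun j _ => abs_nonneg _
    set g : ℝ → ℝ := fun t => f (c + t • v) with hgdef
    have hgc : ContDiff ℝ ((q + 1 : ℕ) : ℕ∞) g := by
      exact_mod_cast hf.comp (contDiff_const.add (contDiff_id.smul contDiff_const))
    have hgder : ∀ (m : ℕ), m ≤ q + 1 → ∀ t : ℝ,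
        iteratedDeriv m g t = iteratedFDeriv ℝ m f (c + t • v) (fun _ => v) :=
      fun m hm t => aux_iteratedDeriv_line hf c v hm t
    have hwithin : ∀ (m : ℕ), m ≤ q + 1 → ∀ t ∈ Set.Icc (0:ℝ) 1,
        iteratedDerivWithin m g (Set.Icc 0 1) t = iteratedDeriv m g t := by
      intro m hm t ht
      rw [iteratedDerivWithin_eq_iteratedFDerivWithin, iteratedDeriv_eq_iteratedFDeriv]
      congr 1
      have hpg : HasFTaylorSeriesUpTo ((q + 1 : ℕ) : ℕ∞) g (ftaylorSeries ℝ g) :=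
        contDiff_iff_ftaylorSeries.mp hgc
      exact ((hpg.hasFTaylorSeriesUpToOn (Set.Icc 0 1)).eq_iteratedFDerivWithin_of_uniqueDiffOn
        (by exact_mod_cast hm) (uniqueDiffOn_Icc zero_lt_one) ht).symm
    have hdiff : DifferentiableOn ℝ (iteratedDerivWithin q g (Set.Icc 0 1)) (Set.Ioo 0 1) := by
      have h1 : DifferentiableOn ℝ (iteratedDeriv q g) (Set.Ioo 0 1) :=
        (hgc.differentiable_iteratedDeriv q (by exact_mod_cast Nat.lt_succ_self q)).differentiableOn
      exact h1.congr fun t ht => hwithin q (Nat.le_succ q) t (Set.mem_Icc_of_Ioo ht)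
    have hTL := taylor_mean_remainder_lagrange (f := g) (x₀ := 0) (x := 1) (n := q)
      zero_ne_one (by rw [Set.uIcc_of_le zero_le_one]; exact hgc.contDiffOn.of_le (by exact_mod_cast Nat.le_succ q))
      (by rw [Set.uIcc_of_le zero_le_one, Set.uIoo_of_le zero_le_one]; exact hdiff)
    rw [Set.uIcc_of_le zero_le_one, Set.uIoo_of_le zero_le_one] at hTL
    obtain ⟨t', ht', hT⟩ := hTL
    have hg1 : g 1 = f y := by simp [hgdef, hvdef]
    have htay : taylorWithinEval g q (Set.Icc 0 1) 0 1 = MvPolynomial.eval (fun j => y j) P := by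
      rw [taylor_within_apply, heval y]
      refine Finset.sum_congr rfl fun k hk => ?_
      have hk' : k ≤ q + 1 := (Nat.lt_succ_iff.mp (Finset.mem_range.mp hk)).trans (Nat.le_succ q)
      rw [hwithin k hk' 0 (by norm_num), hgder k hk' 0]
      have : c + (0 : ℝ) • v = c := by simp
      rw [this]
      simp [smul_eq_mul, hvdef]
    have hrem : iteratedDerivWithin (q + 1) g (Set.Icc 0 1) t'
        = iteratedFDeriv ℝ (q + 1) f (c + t' • v) (fun _ => v) := by
      rw [hwithin (q + 1) le_rfl t' (Set.mem_Icc_of_Ioo ht'), hgder (q + 1) le_rfl t']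
    rw [hg1, htay] at hT
    rw [hT, hrem]
    have hb : |iteratedFDeriv ℝ (q + 1) f (c + t' • v) (fun _ => v)|
        ≤ Cf * (∑ j, |v j|) ^ (q + 1) :=
      aux_bound _ (fun r => hCf (q + 1) le_rfl r (c + t' • v)) v
    have hb2 : Cf * (∑ j, |v j|) ^ (q + 1) ≤ Cf * ((d : ℝ) * (R / 2)) ^ (q + 1) :=
      mul_le_mul_of_nonneg_left (pow_le_pow_left₀ hS0 hS _) hCf0
    have hfac : (0 : ℝ) < ((q + 1).factorial : ℝ) := by positivity
    calc |iteratedFDeriv ℝ (q + 1) f (c + t' • v) (fun _ => v) * (1 - 0) ^ (q + 1)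
            / ((q + 1).factorial : ℝ)|
        = |iteratedFDeriv ℝ (q + 1) f (c + t' • v) (fun _ => v)| / ((q + 1).factorial : ℝ) := by
          rw [abs_div, abs_mul]
          simp [abs_of_pos hfac]
      _ ≤ Cf * ((d : ℝ) * (R / 2)) ^ (q + 1) / ((q + 1).factorial : ℝ) := by
          gcongr
          exact hb.trans hb2
      _ = K := by
          rw [hKdef]
          rw [show (d : ℝ) * (R / 2) = (d : ℝ) / 2 * R by ring, mul_pow]
          ring
  -- assemble
  have hzero : ∑ i, ω i * MvPolynomial.eval (fun j => x i j) P = 0 := hvan P hdeg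
  have hsplit : ∑ i, ω i * f (x i)
      = ∑ i, ω i * (f (x i) - MvPolynomial.eval (fun j => x i j) P) := by
    have h1 : ∑ i, ω i * (f (x i) - MvPolynomial.eval (fun j => x i j) P)
        = ∑ i, ω i * f (x i) - ∑ i, ω i * MvPolynomial.eval (fun j => x i j) P := by
      rw [← Finset.sum_sub_distrib]
      exact Finset.sum_congr rfl fun i _ => by ring
    rw [h1, hzero, sub_zero]
  rw [hsplit]
  calc |∑ i, ω i * (f (x i) - MvPolynomial.eval (fun j => x i j) P)|
      ≤ ∑ i, |ω i * (f (x i) - MvPolynomial.eval (fun j => x i j) P)| :=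
        Finset.abs_sum_le_sum_abs _ _
    _ ≤ ∑ i, |ω i| * K := by
        refine Finset.sum_le_sum fun i _ => ?_
        rw [abs_mul]
        exact mul_le_mul_of_nonneg_left (key (x i) (hx i)) (abs_nonneg _)
    _ = K * ∑ i, |ω i| := by rw [← Finset.sum_mul, mul_comm]
    _ = _ := by rw [hKdef]
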